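/- Let n ≥ 3 be an integer, λ ≥ 1, and let σ be an n×n real symmetric matrix that is uniformly elliptic with constant λ. Define Γ_σ(x) = (⟨σ⁻¹x, x⟩)^{(2−n)/2} for x ∈ ℝⁿ∖{0}. Then the Hessian of Γ_σ satisfies the operator-norm bound ‖D²Γ_σ(x)‖ ≤ (n−2)(n+1) λ^{(n+6)/2} |x|^{−n} for every x ≠ 0. -/

import Mathlib

open Matrix RealInnerProductSpace

section Aux

variable {E : Type*} [NormedAddCommGroup E] [InnerProductSpace ℝ E]

/-- Cauchy–Schwarz for a symmetric positive semidefinite operator. -/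
lemma cs_psd_aux (A : E →L[ℝ] E) (hsym : ∀ u v : E, ⟪A u, v⟫ = ⟪u, A v⟫)
    (hpos : ∀ u : E, 0 ≤ ⟪A u, u⟫) (u v : E) :
    ⟪A u, v⟫ ^ 2 ≤ ⟪A u, u⟫ * ⟪A v, v⟫ := by
  have key : ∀ t : ℝ, 0 ≤ ⟪A v, v⟫ * (t * t) + (2 * ⟪A u, v⟫) * t + ⟪A u, u⟫ := by
    intro t
    have h := hpos (u + t • v)
    have expand : ⟪A (u + t • v), u + t • v⟫ =
        ⟪A v, v⟫ * (t * t) + (2 * ⟪A u, v⟫) * t + ⟪A u, u⟫ := by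
      have hvu : ⟪A v, u⟫ = ⟪A u, v⟫ := by
        rw [hsym v u, real_inner_comm]
      simp only [map_add, _root_.map_smul, inner_add_left, inner_add_right,
        real_inner_smul_left, real_inner_smul_right, hvu]
      ring
    rw [expand] at h; exact h
  have := discrim_le_zero key
  rw [discrim] at this
  nlinarith [this]

lemma abs_le_of_sq_le_sq_aux {a b : ℝ} (hb : 0 ≤ b) (h : a ^ 2 ≤ b ^ 2) : |a| ≤ b := by
  have := Real.sqrt_le_sqrt h
  rwa [Real.sqrt_sq_eq_abs, Real.sqrt_sq hb] at this

end Aux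

section Euc

variable (n : ℕ)

lemma inner_toEuc_aux (M : Matrix (Fin n) (Fin n) ℝ) (x y : EuclideanSpace ℝ (Fin n)) :
    ⟪(LinearMap.toContinuousLinearMap (Matrix.toEuclideanLin M)) x, y⟫ =
      ∑ i, ∑ j, M i j * x j * y i := by
  simp only [LinearMap.coe_toContinuousLinearMap', Matrix.toEuclideanLin_apply,
    PiLp.inner_apply, RCLike.inner_apply, conj_trivial]
  refine Finset.sum_congr rfl fun i _ => ?_
  rw [mul_comm]
  simp [Matrix.mulVec, dotProduct, Finset.sum_mul, mul_assoc]

lemma sym_toEuc_aux (M : Matrix (Fin n) (Fin n) ℝ) (hM : M.IsSymm)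
    (u v : EuclideanSpace ℝ (Fin n)) :
    ⟪(LinearMap.toContinuousLinearMap (Matrix.toEuclideanLin M)) u, v⟫ =
      ⟪u, (LinearMap.toContinuousLinearMap (Matrix.toEuclideanLin M)) v⟫ := by
  rw [← real_inner_comm u ((LinearMap.toContinuousLinearMap (Matrix.toEuclideanLin M)) v),
    inner_toEuc_aux, inner_toEuc_aux, Finset.sum_comm]
  refine Finset.sum_congr rfl fun i _ => Finset.sum_congr rfl fun j _ => ?_
  rw [← hM.apply i j]
  ring

lemma comp_toEuc_aux (M N : Matrix (Fin n) (Fin n) ℝ) (x : EuclideanSpace ℝ (Fin n)) :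
    Matrix.toEuclideanLin M (Matrix.toEuclideanLin N x) = Matrix.toEuclideanLin (M * N) x := by
  simp only [Matrix.toEuclideanLin_apply]
  show (WithLp.equiv 2 (Fin n → ℝ)).symm (M *ᵥ (N *ᵥ (WithLp.equiv 2 (Fin n → ℝ)) x)) = _
  rw [Matrix.mulVec_mulVec]
  rfl

lemma one_toEuc_aux (x : EuclideanSpace ℝ (Fin n)) :
    Matrix.toEuclideanLin (1 : Matrix (Fin n) (Fin n) ℝ) x = x := by
  simp [Matrix.toEuclideanLin_apply]

end Euc

noncomputable def Lmap_aux {E : Type*} [NormedAddCommGroup E] [InnerProductSpace ℝ E]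
    [FiniteDimensional ℝ E] (A : E →L[ℝ] E) : E →L[ℝ] (E →L[ℝ] ℝ) :=
  LinearMap.toContinuousLinearMap
    { toFun := fun y => (2 : ℝ) • (innerSL ℝ (A y) : E →L[ℝ] ℝ)
      map_add' := by
        intro y z
        ext w
        simp [inner_add_left]
      map_smul' := by
        intro c y
        ext w
        simp [inner_smul_left]
        ring }

lemma Lmap_aux_apply {E : Type*} [NormedAddCommGroup E] [InnerProductSpace ℝ E]
    [FiniteDimensional ℝ E] (A : E →L[ℝ] E) (y w : E) :
    Lmap_aux A y w = 2 * ⟪A y, w⟫ := by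
  simp [Lmap_aux]

set_option maxHeartbeats 1000000 in
/-- For `n ≥ 3` and `σ` symmetric and uniformly elliptic with constant
`l ≥ 1`, the Hessian of `Γ_σ(x) = (⟨σ⁻¹x, x⟩)^((2-n)/2)` satisfies the operator-norm bound
`‖D²Γ_σ(x)‖ ≤ (n-2)(n+1) l^((n+6)/2) |x|^(-n)` for every `x ≠ 0`. -/
theorem fundamental_solution_hessian_bound
    (n : ℕ) (hn : 3 ≤ n) (l : ℝ) (hl : 1 ≤ l)
    (σ : Matrix (Fin n) (Fin n) ℝ) (hσsymm : σ.IsSymm)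
    (hell : ∀ ξ : EuclideanSpace ℝ (Fin n),
      l⁻¹ * ‖ξ‖ ^ 2 ≤ ∑ i, ∑ j, σ i j * ξ j * ξ i ∧
      ∑ i, ∑ j, σ i j * ξ j * ξ i ≤ l * ‖ξ‖ ^ 2)
    (Γ : EuclideanSpace ℝ (Fin n) → ℝ)
    (hΓ : Γ = fun x => (∑ i, ∑ j, σ⁻¹ i j * x j * x i) ^ (((2 : ℝ) - n) / 2)) :
    ∀ x : EuclideanSpace ℝ (Fin n), x ≠ 0 →
      ‖fderiv ℝ (fun y => fderiv ℝ Γ y) x‖ ≤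
        ((n : ℝ) - 2) * ((n : ℝ) + 1) * l ^ (((n : ℝ) + 6) / 2) * ‖x‖ ^ (-(n : ℝ)) := by
  classical
  intro x hx
  have hl0 : (0 : ℝ) < l := lt_of_lt_of_le one_pos hl
  set p : ℝ := ((2 : ℝ) - n) / 2 with hp_def
  set A : EuclideanSpace ℝ (Fin n) →L[ℝ] EuclideanSpace ℝ (Fin n) :=
    LinearMap.toContinuousLinearMap (Matrix.toEuclideanLin σ⁻¹) with hA_def
  set T : EuclideanSpace ℝ (Fin n) →L[ℝ] EuclideanSpace ℝ (Fin n) :=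
    LinearMap.toContinuousLinearMap (Matrix.toEuclideanLin σ) with hT_def
  -- ellipticity for T
  have hTell : ∀ ξ : EuclideanSpace ℝ (Fin n),
      l⁻¹ * ‖ξ‖ ^ 2 ≤ ⟪T ξ, ξ⟫ ∧ ⟪T ξ, ξ⟫ ≤ l * ‖ξ‖ ^ 2 := by
    intro ξ; rw [hT_def, inner_toEuc_aux]; exact hell ξ
  have hTsym : ∀ u v : EuclideanSpace ℝ (Fin n), ⟪T u, v⟫ = ⟪u, T v⟫ := fun u v =>
    sym_toEuc_aux n σ hσsymm u v
  have hTpos : ∀ u : EuclideanSpace ℝ (Fin n), 0 ≤ ⟪T u, u⟫ := fun u =>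
    le_trans (by positivity) (hTell u).1
  -- σ is positive definite, hence invertible
  have hσpd : σ.PosDef := by
    refine Matrix.posDef_iff_dotProduct_mulVec.mpr ⟨?_, ?_⟩
    · rwa [Matrix.IsHermitian, conjTranspose_eq_transpose_of_trivial]
    · intro v hv
      have hξ : ((WithLp.equiv 2 (Fin n → ℝ)).symm v : EuclideanSpace ℝ (Fin n)) ≠ 0 := by
        simpa using hv
      have h1 := (hell ((WithLp.equiv 2 (Fin n → ℝ)).symm v)).1
      have h2 : (0 : ℝ) < l⁻¹ * ‖((WithLp.equiv 2 (Fin n → ℝ)).symm v :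
          EuclideanSpace ℝ (Fin n))‖ ^ 2 := by
        have := norm_pos_iff.mpr hξ
        positivity
      have h3 : star v ⬝ᵥ (σ *ᵥ v) = ∑ i, ∑ j, σ i j *
          ((WithLp.equiv 2 (Fin n → ℝ)).symm v : EuclideanSpace ℝ (Fin n)) j *
          ((WithLp.equiv 2 (Fin n → ℝ)).symm v : EuclideanSpace ℝ (Fin n)) i := by
        simp only [star_trivial, dotProduct, Matrix.mulVec, Finset.mul_sum]
        refine Finset.sum_congr rfl fun i _ => Finset.sum_congr rfl fun j _ => ?_
        show v i * (σ i j * v j) = σ i j * v j * v i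
        ring
      rw [h3]
      exact lt_of_lt_of_le h2 h1
  have hinv : σ * σ⁻¹ = 1 := Matrix.mul_nonsing_inv σ hσpd.det_pos.ne'.isUnit
  have hTA : ∀ v : EuclideanSpace ℝ (Fin n), T (A v) = v := by
    intro v
    show Matrix.toEuclideanLin σ (Matrix.toEuclideanLin σ⁻¹ v) = v
    rw [comp_toEuc_aux, hinv, one_toEuc_aux]
  -- the quadratic form Q
  set Q : EuclideanSpace ℝ (Fin n) → ℝ := fun v => ⟪A v, v⟫ with hQ_def
  have hAinv : σ⁻¹.IsSymm := by
    rw [Matrix.IsSymm, Matrix.transpose_nonsing_inv, hσsymm]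
  have hAsym : ∀ u v : EuclideanSpace ℝ (Fin n), ⟪A u, v⟫ = ⟪u, A v⟫ := fun u v =>
    sym_toEuc_aux n σ⁻¹ hAinv u v
  have hTCS := cs_psd_aux T hTsym hTpos
  have hQTv : ∀ v : EuclideanSpace ℝ (Fin n), ⟪T (A v), A v⟫ = Q v := by
    intro v
    rw [hTA v]
    exact (real_inner_comm v (A v)).symm
  have hQpos : ∀ v : EuclideanSpace ℝ (Fin n), 0 ≤ Q v := fun v =>
    (hQTv v) ▸ hTpos (A v)
  have hQu : ∀ v : EuclideanSpace ℝ (Fin n), Q v ≤ l * ‖v‖ ^ 2 := by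
    intro v
    have hyQ : ‖A v‖ ^ 2 ≤ l * Q v := by
      have h1 := (hTell (A v)).1
      rw [hQTv v] at h1
      exact (inv_mul_le_iff₀ hl0).mp h1
    have hQle : Q v ≤ ‖v‖ * ‖A v‖ := by
      rw [← hQTv v, hTA v]
      exact real_inner_le_norm v (A v)
    by_cases hQ0 : Q v = 0
    · rw [hQ0]; positivity
    · have hQgt : 0 < Q v := lt_of_le_of_ne (hQpos v) (Ne.symm hQ0)
      have h4 : Q v * Q v ≤ (‖v‖ * ‖A v‖) * (‖v‖ * ‖A v‖) :=
        mul_le_mul hQle hQle (hQpos v) (by positivity)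
      have h6 : ‖v‖ ^ 2 * ‖A v‖ ^ 2 ≤ ‖v‖ ^ 2 * (l * Q v) :=
        mul_le_mul_of_nonneg_left hyQ (by positivity)
      nlinarith [hQgt, h4, h6]
  have hQl : ∀ v : EuclideanSpace ℝ (Fin n), l⁻¹ * ‖v‖ ^ 2 ≤ Q v := by
    intro v
    have hcs := hTCS (A v) v
    rw [hQTv v] at hcs
    have h1 : ⟪T (A v), v⟫ = ‖v‖ ^ 2 := by rw [hTA v, real_inner_self_eq_norm_sq]
    rw [h1] at hcs
    have hcs2 : (‖v‖ ^ 2) ^ 2 ≤ Q v * (l * ‖v‖ ^ 2) :=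
      le_trans hcs (mul_le_mul_of_nonneg_left (hTell v).2 (hQpos v))
    rw [inv_mul_le_iff₀ hl0]
    rcases eq_or_lt_of_le (norm_nonneg v) with h0 | h0
    · rw [← h0]
      simpa using mul_nonneg hl0.le (hQpos v)
    · have hv2 : (0:ℝ) < ‖v‖ ^ 2 := by positivity
      nlinarith [hcs2, hv2]
  have hACS := cs_psd_aux A hAsym hQpos
  -- the bilinear map L (second derivative of Q, and y ↦ derivative of Q at y)
  set L : EuclideanSpace ℝ (Fin n) →L[ℝ] (EuclideanSpace ℝ (Fin n) →L[ℝ] ℝ) :=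
    Lmap_aux A with hL_def
  have hLapp : ∀ y w : EuclideanSpace ℝ (Fin n), L y w = 2 * ⟪A y, w⟫ := fun y w =>
    Lmap_aux_apply A y w
  have hQderiv : ∀ v : EuclideanSpace ℝ (Fin n), HasFDerivAt Q (L v) v := by
    intro v
    have h := (A.hasFDerivAt (x := v)).inner ℝ (hasFDerivAt_id v)
    refine h.congr_fderiv ?_
    ext w
    simp only [ContinuousLinearMap.comp_apply, ContinuousLinearMap.prod_apply,
      ContinuousLinearMap.coe_id', id_eq, fderivInnerCLM_apply]
    rw [hLapp]
    have : ⟪A w, v⟫ = ⟪A v, w⟫ := by rw [hAsym w v]; exact (real_inner_comm w (A v)).symm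
    rw [this]; ring
  have hΓ' : Γ = fun v => Q v ^ p := by
    rw [hΓ]
    funext v
    congr 1
    exact (inner_toEuc_aux n σ⁻¹ v v).symm
  have hQne : ∀ v : EuclideanSpace ℝ (Fin n), v ≠ 0 → 0 < Q v := by
    intro v hv
    refine lt_of_lt_of_le ?_ (hQl v)
    have := norm_pos_iff.mpr hv
    positivity
  have hQx : 0 < Q x := hQne x hx
  have hdΓ : ∀ v : EuclideanSpace ℝ (Fin n), v ≠ 0 →
      HasFDerivAt Γ ((p * Q v ^ (p - 1)) • L v) v := by
    intro v hv
    rw [hΓ']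
    exact (hQderiv v).rpow_const (Or.inl (hQne v hv).ne')
  set G : EuclideanSpace ℝ (Fin n) → (EuclideanSpace ℝ (Fin n) →L[ℝ] ℝ) :=
    fun v => (p * Q v ^ (p - 1)) • L v with hG_def
  have heq : (fun y => fderiv ℝ Γ y) =ᶠ[nhds x] G := by
    filter_upwards [compl_singleton_mem_nhds hx] with v hv
    exact (hdΓ v hv).fderiv
  set c2 : ℝ := p * ((p - 1) * Q x ^ (p - 1 - 1)) with hc2_def
  have hc : HasFDerivAt (fun v => p * Q v ^ (p - 1)) (c2 • L x) x := by
    have h := ((hQderiv x).rpow_const (Or.inl hQx.ne') :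
      HasFDerivAt (fun v => Q v ^ (p - 1)) (((p - 1) * Q x ^ (p - 1 - 1)) • L x) x)
    have h2 := h.const_mul p
    refine h2.congr_fderiv ?_
    rw [smul_smul, hc2_def]
  have hG : HasFDerivAt G ((p * Q x ^ (p - 1)) • L + (c2 • L x).smulRight (L x)) x := by
    rw [hG_def]
    exact hc.smul (L.hasFDerivAt (x := x))
  have hM : fderiv ℝ (fun y => fderiv ℝ Γ y) x =
      (p * Q x ^ (p - 1)) • L + (c2 • L x).smulRight (L x) := by
    rw [heq.fderiv_eq]
    exact hG.fderiv
  have hn3 : (3:ℝ) ≤ (n:ℝ) := by exact_mod_cast hn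
  have habs_p : |p| = ((n:ℝ) - 2) / 2 := by
    rw [hp_def, abs_of_nonpos (by linarith : ((2:ℝ) - n) / 2 ≤ 0)]
    ring
  have habs_p1 : |p - 1| = (n:ℝ) / 2 := by
    rw [hp_def, abs_of_nonpos (by linarith : ((2:ℝ) - n) / 2 - 1 ≤ 0)]
    ring
  have hQp1 : (0:ℝ) < Q x ^ (p - 1) := Real.rpow_pos_of_pos hQx _
  have hQp2 : (0:ℝ) < Q x ^ (p - 1 - 1) := Real.rpow_pos_of_pos hQx _
  have hpow : Q x ^ (p - 1 - 1) * Q x = Q x ^ (p - 1) := by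
    have h := Real.rpow_add_one hQx.ne' (p - 1 - 1)
    rw [show p - 1 - 1 + 1 = p - 1 by ring] at h
    rw [← h]
  have hb1 : ∀ u w : EuclideanSpace ℝ (Fin n), |⟪A u, w⟫| ≤ l * (‖u‖ * ‖w‖) := by
    intro u w
    refine abs_le_of_sq_le_sq_aux (by positivity) ?_
    calc ⟪A u, w⟫ ^ 2 ≤ Q u * Q w := hACS u w
      _ ≤ (l * ‖u‖ ^ 2) * (l * ‖w‖ ^ 2) :=
          mul_le_mul (hQu u) (hQu w) (hQpos w) (by positivity)
      _ = (l * (‖u‖ * ‖w‖)) ^ 2 := by ring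
  have hb2 : ∀ u w : EuclideanSpace ℝ (Fin n),
      |⟪A x, u⟫ * ⟪A x, w⟫| ≤ Q x * l * (‖u‖ * ‖w‖) := by
    intro u w
    refine abs_le_of_sq_le_sq_aux (by positivity) ?_
    calc (⟪A x, u⟫ * ⟪A x, w⟫) ^ 2 = ⟪A x, u⟫ ^ 2 * ⟪A x, w⟫ ^ 2 := by ring
      _ ≤ (Q x * Q u) * (Q x * Q w) :=
          mul_le_mul (hACS x u) (hACS x w) (sq_nonneg _) (mul_nonneg (hQpos x) (hQpos u))
      _ ≤ (Q x * (l * ‖u‖ ^ 2)) * (Q x * (l * ‖w‖ ^ 2)) := by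
          refine mul_le_mul (mul_le_mul_of_nonneg_left (hQu u) (hQpos x))
            (mul_le_mul_of_nonneg_left (hQu w) (hQpos x))
            (mul_nonneg (hQpos x) (hQpos w)) ?_
          have := hQpos x
          positivity
      _ = (Q x * l * (‖u‖ * ‖w‖)) ^ 2 := by ring
  set K : ℝ := ((n:ℝ) - 2) * ((n:ℝ) + 1) * l * Q x ^ (p - 1) with hK_def
  have hn2 : (0:ℝ) ≤ (n:ℝ) - 2 := by linarith
  have hn1 : (0:ℝ) ≤ (n:ℝ) + 1 := by linarith
  have hK0 : 0 ≤ K := mul_nonneg (mul_nonneg (mul_nonneg hn2 hn1) hl0.le) hQp1.le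
  have hmain : ‖fderiv ℝ (fun y => fderiv ℝ Γ y) x‖ ≤ K := by
    rw [hM]
    refine ContinuousLinearMap.opNorm_le_bound _ hK0 (fun u => ?_)
    refine ContinuousLinearMap.opNorm_le_bound _ (mul_nonneg hK0 (norm_nonneg u)) (fun w => ?_)
    have happ : (((p * Q x ^ (p - 1)) • L + (c2 • L x).smulRight (L x)) u) w
        = (p * Q x ^ (p - 1)) * (L u w) + (c2 * (L x u)) * (L x w) := by
      simp [ContinuousLinearMap.smulRight_apply, smul_eq_mul]
    rw [happ, Real.norm_eq_abs]
    have eL : |L u w| ≤ 2 * (l * (‖u‖ * ‖w‖)) := by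
      rw [hLapp, abs_mul, abs_two]
      exact mul_le_mul_of_nonneg_left (hb1 u w) (by norm_num)
    have e1 : |(p * Q x ^ (p - 1)) * (L u w)| ≤
        (((n:ℝ) - 2) / 2 * Q x ^ (p - 1)) * (2 * (l * (‖u‖ * ‖w‖))) := by
      rw [abs_mul, abs_mul, abs_of_pos hQp1, habs_p]
      exact mul_le_mul_of_nonneg_left eL (mul_nonneg (by linarith) hQp1.le)
    have eL2 : |(L x u) * (L x w)| ≤ 4 * (Q x * l * (‖u‖ * ‖w‖)) := by
      rw [hLapp, hLapp, show (2 * ⟪A x, u⟫) * (2 * ⟪A x, w⟫)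
        = 4 * (⟪A x, u⟫ * ⟪A x, w⟫) by ring, abs_mul,
        show |(4:ℝ)| = 4 by norm_num]
      exact mul_le_mul_of_nonneg_left (hb2 u w) (by norm_num)
    have hc2abs : |c2| = ((n:ℝ) - 2) / 2 * ((n:ℝ) / 2) * Q x ^ (p - 1 - 1) := by
      rw [hc2_def, abs_mul, abs_mul, habs_p, habs_p1, abs_of_pos hQp2]
      ring
    have e2 : |(c2 * (L x u)) * (L x w)| ≤
        (((n:ℝ) - 2) / 2 * ((n:ℝ) / 2) * Q x ^ (p - 1 - 1)) * (4 * (Q x * l * (‖u‖ * ‖w‖))) := by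
      rw [mul_assoc, abs_mul, hc2abs]
      refine mul_le_mul_of_nonneg_left eL2 ?_
      exact mul_nonneg (mul_nonneg (by linarith) (by linarith)) hQp2.le
    calc |(p * Q x ^ (p - 1)) * (L u w) + (c2 * (L x u)) * (L x w)|
        ≤ |(p * Q x ^ (p - 1)) * (L u w)| + |(c2 * (L x u)) * (L x w)| := abs_add_le _ _
      _ ≤ (((n:ℝ) - 2) / 2 * Q x ^ (p - 1)) * (2 * (l * (‖u‖ * ‖w‖)))
          + (((n:ℝ) - 2) / 2 * ((n:ℝ) / 2) * Q x ^ (p - 1 - 1)) * (4 * (Q x * l * (‖u‖ * ‖w‖))) :=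
          add_le_add e1 e2
      _ = K * ‖u‖ * ‖w‖ := by rw [hK_def, ← hpow]; ring
  have hxn : (0:ℝ) < ‖x‖ := norm_pos_iff.mpr hx
  have hexp : p - 1 = -((n:ℝ) / 2) := by rw [hp_def]; ring
  have hQb : Q x ^ (p - 1) ≤ l ^ ((n:ℝ) / 2) * ‖x‖ ^ (-(n:ℝ)) := by
    have h1 : Q x ^ (p - 1) ≤ (l⁻¹ * ‖x‖ ^ 2) ^ (p - 1) :=
      Real.rpow_le_rpow_of_nonpos (by positivity) (hQl x) (by rw [hexp]; linarith)
    refine le_trans h1 (le_of_eq ?_)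
    rw [hexp, Real.mul_rpow (by positivity) (by positivity), Real.inv_rpow hl0.le,
      Real.rpow_neg hl0.le, inv_inv]
    congr 1
    rw [← Real.rpow_natCast ‖x‖ 2, ← Real.rpow_mul (norm_nonneg x)]
    congr 1
    push_cast
    ring
  have hll : l * l ^ ((n:ℝ) / 2) = l ^ (((n:ℝ) + 2) / 2) := by
    rw [show ((n:ℝ) + 2) / 2 = (1:ℝ) + (n:ℝ) / 2 by ring, Real.rpow_add hl0, Real.rpow_one]
  have hle2 : l ^ (((n:ℝ) + 2) / 2) ≤ l ^ (((n:ℝ) + 6) / 2) :=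
    Real.rpow_le_rpow_of_exponent_le hl (by linarith)
  have hxnn : (0:ℝ) ≤ ‖x‖ ^ (-(n:ℝ)) := Real.rpow_nonneg (norm_nonneg x) _
  have hfin : K ≤ ((n:ℝ) - 2) * ((n:ℝ) + 1) * l ^ (((n:ℝ) + 6) / 2) * ‖x‖ ^ (-(n:ℝ)) := by
    calc K = ((n:ℝ) - 2) * ((n:ℝ) + 1) * (l * Q x ^ (p - 1)) := by rw [hK_def]; ring
      _ ≤ ((n:ℝ) - 2) * ((n:ℝ) + 1) * (l * (l ^ ((n:ℝ) / 2) * ‖x‖ ^ (-(n:ℝ)))) := by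
          refine mul_le_mul_of_nonneg_left ?_ (mul_nonneg hn2 hn1)
          exact mul_le_mul_of_nonneg_left hQb hl0.le
      _ = ((n:ℝ) - 2) * ((n:ℝ) + 1) * (l ^ (((n:ℝ) + 2) / 2) * ‖x‖ ^ (-(n:ℝ))) := by
          rw [← mul_assoc l, hll]
      _ ≤ ((n:ℝ) - 2) * ((n:ℝ) + 1) * (l ^ (((n:ℝ) + 6) / 2) * ‖x‖ ^ (-(n:ℝ))) := by
          exact mul_le_mul_of_nonneg_left (mul_le_mul_of_nonneg_right hle2 hxnn)
            (mul_nonneg hn2 hn1)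
      _ = _ := by ring
  exact le_trans hmain hfin
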